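/- Let p be a prime and μ ∈ ZMod p with μ ≠ 0. Then the set {f ∈ (ZMod p)[X] : f.comp (X + C μ) = f} equals Algebra.adjoin (ZMod p) {X^p − X}, the subalgebra of (ZMod p)[X] generated by the polynomial X^p − X. -/

import Mathlib

open Polynomial

theorem stmt1 (p : ℕ) [Fact p.Prime] (μ : ZMod p) (hμ : μ ≠ 0) :
    {f : Polynomial (ZMod p) | f.comp (X + C μ) = f} =
      (Algebra.adjoin (ZMod p) {(X : Polynomial (ZMod p)) ^ p - X} :
        Subalgebra (ZMod p) (Polynomial (ZMod p))) := by
  have hp := (Fact.out : p.Prime)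
  set g : Polynomial (ZMod p) := X ^ p - X with hgdef
  have hginv : g.comp (X + C μ) = g := by
    have h1 : (X + C μ : Polynomial (ZMod p)) ^ p = X ^ p + C μ ^ p :=
      add_pow_char _ _ _
    simp only [hgdef, sub_comp, pow_comp, X_comp, C_comp, h1, ← C_pow, ZMod.pow_card]
    ring
  have hgmonic : g.Monic := by
    apply monic_X_pow_sub
    rw [degree_X]; exact_mod_cast hp.one_lt
  have hgdeg : g.degree = p := by
    rw [hgdef, sub_eq_add_neg, degree_add_eq_left_of_degree_lt, degree_X_pow]
    rw [degree_neg, degree_X_pow, degree_X]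
    exact_mod_cast hp.one_lt
  have hgnatdeg : g.natDegree = p := natDegree_eq_of_degree_eq_some hgdeg
  -- composition of translations
  have hstep : ∀ (f : Polynomial (ZMod p)) (a b : ZMod p),
      (f.comp (X + C a)).comp (X + C b) = f.comp (X + C (a + b)) := by
    intro f a b
    rw [comp_assoc]
    congr 1
    simp [add_comp, C_add]
    ring
  -- invariance under all translations
  have hall : ∀ f : Polynomial (ZMod p), f.comp (X + C μ) = f →
      ∀ c : ZMod p, f.comp (X + C c) = f := by
    intro f hf c
    have h1 : ∀ n : ℕ, f.comp (X + C (n • μ)) = f := by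
      intro n
      induction n with
      | zero => simp
      | succ n ih =>
        have := hstep f (n • μ) μ
        rw [ih, hf] at this
        rw [succ_nsmul]
        exact this.symm
    have hc : c = ((c * μ⁻¹).val : ℕ) • μ := by
      rw [nsmul_eq_mul, ZMod.natCast_val, ZMod.cast_id]
      field_simp
    rw [hc]; exact h1 _
  -- small degree case: invariant polys of degree < p are constants
  have hsmallcase : ∀ f : Polynomial (ZMod p), f.natDegree < p →
      f.comp (X + C μ) = f → f = C (f.eval 0) := by
    intro f hdeg hf
    have heval : ∀ c : ZMod p, f.eval c = f.eval 0 := by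
      intro c
      have h2 := congrArg (eval 0) (hall f hf c)
      rw [eval_comp] at h2
      simp at h2
      exact h2
    have hz : f - C (f.eval 0) = 0 := by
      apply eq_zero_of_natDegree_lt_card_of_eval_eq_zero _ (Function.injective_id)
      · intro c
        simp [heval c]
      · calc (f - C (f.eval 0)).natDegree ≤ max f.natDegree (C (f.eval 0)).natDegree :=
              natDegree_sub_le _ _
          _ < p := by simp [hdeg, hp.pos]
          _ = Fintype.card (ZMod p) := (ZMod.card p).symm
    exact sub_eq_zero.mp hz
  -- main induction
  have hppos : 0 < p := hp.pos
  have main : ∀ (n : ℕ) (f : Polynomial (ZMod p)), f.natDegree ≤ n →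
      f.comp (X + C μ) = f → f ∈ Algebra.adjoin (ZMod p) {g} := by
    intro n
    induction n using Nat.strong_induction_on with
    | _ n ih =>
      intro f hdeg hf
      by_cases hsmall : f.natDegree < p
      · rw [hsmallcase f hsmall hf, ← algebraMap_eq]
        exact Subalgebra.algebraMap_mem _ _
      · push_neg at hsmall
        set q := f /ₘ g with hq
        set r := f %ₘ g with hr
        have hfeq : f = g * q + r := by
          rw [hq, hr, add_comm]
          exact (modByMonic_add_div f g).symm
        have hrdeg : r.degree < g.degree := degree_modByMonic_lt f hgmonic
        have hcompdeg : (r.comp (X + C μ)).degree = r.degree := by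
          rcases eq_or_ne r 0 with h0 | h0
          · simp [h0]
          · rw [degree_eq_natDegree h0, degree_eq_natDegree, natDegree_comp]
            · simp
            · intro hc
              apply h0
              have := natDegree_comp (p := r) (q := X + C μ)
              rw [hc] at this
              simp at this
              have hconst : r = C (r.coeff 0) := eq_C_of_natDegree_eq_zero this.symm
              have := congrArg (eval 0) hc
              rw [eval_comp] at this
              simp at this
              rw [hconst] at this ⊢
              simp at this
              simp [this]
        have huniq : f /ₘ g = q.comp (X + C μ) ∧ f %ₘ g = r.comp (X + C μ) := by
          apply div_modByMonic_unique _ _ hgmonic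
          constructor
          · have := congrArg (fun h => h.comp (X + C μ)) hfeq
            simp only [add_comp, mul_comp, hginv] at this
            rw [hf] at this
            rw [this]; ring
          · rw [hcompdeg]; exact hrdeg
        have hqinv : q.comp (X + C μ) = q := (huniq.1).symm
        have hrinv : r.comp (X + C μ) = r := (huniq.2).symm
        rcases eq_or_ne f 0 with hf0 | hf0
        · rw [hf0]; exact Subalgebra.zero_mem _
        have hqdeg : q.natDegree = f.natDegree - p := by
          rw [hq, natDegree_divByMonic f hgmonic, hgnatdeg]
        have hqmem : q ∈ Algebra.adjoin (ZMod p) {g} := by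
          apply ih (f.natDegree - p) _ q (le_of_eq hqdeg) hqinv
          calc f.natDegree - p < f.natDegree := by omega
            _ ≤ n := hdeg
        have hrmem : r ∈ Algebra.adjoin (ZMod p) {g} := by
          have hrdeg' : r.natDegree < p := by
            have := natDegree_modByMonic_lt f hgmonic (by
              intro h1
              rw [h1] at hgnatdeg
              simp at hgnatdeg
              omega)
            rwa [hgnatdeg] at this
          rw [hsmallcase r hrdeg' hrinv, ← algebraMap_eq]
          exact Subalgebra.algebraMap_mem _ _
        rw [hfeq]
        exact Subalgebra.add_mem _
          (Subalgebra.mul_mem _ (Algebra.subset_adjoin rfl) hqmem) hrmem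
  ext f
  simp only [Set.mem_setOf_eq, SetLike.mem_coe]
  constructor
  · intro hf
    exact main f.natDegree f le_rfl hf
  · intro hf
    induction hf using Algebra.adjoin_induction with
    | mem x hx => rw [Set.mem_singleton_iff] at hx; rw [hx]; exact hginv
    | algebraMap r => simp [algebraMap_eq]
    | add x y _ _ hx hy => rw [add_comp, hx, hy]
    | mul x y _ _ hx hy => rw [mul_comp, hx, hy]
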